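/- Let X₀, X₁, X₂ be random variables on a probability space taking values in the same nonempty finite type, such that (i) X₀ and X₂ are conditionally independent given X₁ (the Markov property), and (ii) the joint distribution of (X₀, X₁) equals the joint distribution of (X₁, X₂) (row stationarity). Then H(X₁) + H(X₁ | X₀, X₂) = 2·H(X₁ | X₀) + I(X₂ ; X₀). -/

import Mathlib

open scoped BigOperators
open MeasureTheory

/-- `pr μ X x = P(X = x)` for a random variable `X` on `(Ω, μ)`. -/
noncomputable def pr {Ω α : Type*} [MeasurableSpace Ω] (μ : Measure Ω)
    (X : Ω → α) (x : α) : ℝ :=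
  (μ (X ⁻¹' {x})).toReal

/-- Shannon entropy `H(X) = −Σ_x P(X = x) log P(X = x)` of a finite-valued random variable. -/
noncomputable def entropy {Ω α : Type*} [MeasurableSpace Ω] [Fintype α]
    (μ : Measure Ω) (X : Ω → α) : ℝ :=
  ∑ x, Real.negMulLog (pr μ X x)

/-- Conditional Shannon entropy `H(X | Y) = H(X, Y) − H(Y)`. -/
noncomputable def condEntropy {Ω α β : Type*} [MeasurableSpace Ω] [Fintype α] [Fintype β]
    (μ : Measure Ω) (X : Ω → α) (Y : Ω → β) : ℝ :=
  entropy μ (fun ω => (X ω, Y ω)) - entropy μ Y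

/-- Mutual information `I(X ; Y) = H(X) − H(X | Y)`. -/
noncomputable def mutualInfo {Ω α β : Type*} [MeasurableSpace Ω] [Fintype α] [Fintype β]
    (μ : Measure Ω) (X : Ω → α) (Y : Ω → β) : ℝ :=
  entropy μ X - condEntropy μ X Y

/-- Conditional mutual information `I(X ; Z | Y) = H(X | Y) + H(Z | Y) − H(X, Z | Y)`. -/
noncomputable def condMutualInfo {Ω α β γ : Type*} [MeasurableSpace Ω]
    [Fintype α] [Fintype β] [Fintype γ]
    (μ : Measure Ω) (X : Ω → α) (Z : Ω → β) (Y : Ω → γ) : ℝ :=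
  condEntropy μ X Y + condEntropy μ Z Y - condEntropy μ (fun ω => (X ω, Z ω)) Y

/-- Kullback–Leibler divergence between two pmfs on a finite type,
with the convention `0 * log (0 / v x) = 0` (automatic since `0 * r = 0` in `ℝ`). -/
noncomputable def klDiv {α : Type*} [Fintype α] (u v : α → ℝ) : ℝ :=
  ∑ x, u x * Real.log (u x / v x)

lemma pr_nonneg {Ω α : Type*} [MeasurableSpace Ω] (μ : Measure Ω) (X : Ω → α) (x : α) :
    0 ≤ pr μ X x := ENNReal.toReal_nonneg

lemma pr_congr {Ω α β : Type*} [MeasurableSpace Ω] (μ : Measure Ω) {X : Ω → α} {Y : Ω → β}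
    {x : α} {y : β} (h : X ⁻¹' {x} = Y ⁻¹' {y}) : pr μ X x = pr μ Y y := by
  unfold pr; rw [h]

lemma pr_fst {Ω α β : Type*} [MeasurableSpace Ω] (μ : Measure Ω) [IsProbabilityMeasure μ]
    [Fintype β] [MeasurableSpace α] [MeasurableSingletonClass α]
    [MeasurableSpace β] [MeasurableSingletonClass β]
    {X : Ω → α} {Y : Ω → β} (hX : Measurable X) (hY : Measurable Y) (x : α) :
    pr μ X x = ∑ y, pr μ (fun ω => (X ω, Y ω)) (x, y) := by
  unfold pr
  rw [← ENNReal.toReal_sum (fun y _ => measure_ne_top μ _)]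
  congr 1
  have hset : X ⁻¹' {x} = ⋃ y ∈ (Finset.univ : Finset β),
      (fun ω => (X ω, Y ω)) ⁻¹' {(x, y)} := by
    ext ω; simp [Prod.ext_iff]
  rw [hset, measure_biUnion_finset]
  · intro y _ z _ hyz
    refine Set.disjoint_left.2 fun ω h1 h2 => hyz ?_
    simp only [Set.mem_preimage, Set.mem_singleton_iff, Prod.ext_iff] at h1 h2
    rw [← h1.2, h2.2]
  · intro y _
    have : (fun ω => (X ω, Y ω)) ⁻¹' {(x, y)} = X ⁻¹' {x} ∩ Y ⁻¹' {y} := by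
      ext ω; simp [Prod.ext_iff]
    rw [this]
    exact (hX (measurableSet_singleton x)).inter (hY (measurableSet_singleton y))

lemma pr_snd {Ω α β : Type*} [MeasurableSpace Ω] (μ : Measure Ω) [IsProbabilityMeasure μ]
    [Fintype α] [MeasurableSpace α] [MeasurableSingletonClass α]
    [MeasurableSpace β] [MeasurableSingletonClass β]
    {X : Ω → α} {Y : Ω → β} (hX : Measurable X) (hY : Measurable Y) (y : β) :
    pr μ Y y = ∑ x, pr μ (fun ω => (X ω, Y ω)) (x, y) := by
  rw [pr_fst μ hY hX y]
  exact Finset.sum_congr rfl fun x _ => pr_congr μ (by ext ω; simp [Prod.ext_iff, and_comm])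

lemma entropy_comp_equiv {Ω α β : Type*} [MeasurableSpace Ω] (μ : Measure Ω)
    [Fintype α] [Fintype β] (X : Ω → α) (e : α ≃ β) :
    entropy μ (fun ω => e (X ω)) = entropy μ X := by
  unfold entropy
  rw [← Equiv.sum_comp e]
  refine Finset.sum_congr rfl fun x _ => ?_
  congr 1
  exact pr_congr μ (by ext ω; simp)

/-- Entropy content of Proposition 4 of the paper: for a row-stationary Markov triple
`X₀, X₁, X₂` (values in the same finite type),
`H(X₁) + H(X₁ | X₀, X₂) = 2·H(X₁ | X₀) + I(X₂ ; X₀)`.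
The Markov property `X₀ ⊥ X₂ | X₁` is stated in the product form
`P(X₀=a, X₁=b, X₂=c)·P(X₁=b) = P(X₀=a, X₁=b)·P(X₁=b, X₂=c)`, and row stationarity
as equality of the joint distributions of `(X₀, X₁)` and `(X₁, X₂)`. -/
theorem rcc_average_rate_identity
    {Ω : Type*} [MeasurableSpace Ω] (μ : Measure Ω) [IsProbabilityMeasure μ]
    {α : Type*} [Fintype α] [Nonempty α]
    [MeasurableSpace α] [MeasurableSingletonClass α]
    (X₀ X₁ X₂ : Ω → α)
    (hX₀ : Measurable X₀) (hX₁ : Measurable X₁) (hX₂ : Measurable X₂)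
    (hMarkov : ∀ a b c : α,
      pr μ (fun ω => (X₀ ω, X₁ ω, X₂ ω)) (a, b, c) * pr μ X₁ b
        = pr μ (fun ω => (X₀ ω, X₁ ω)) (a, b) * pr μ (fun ω => (X₁ ω, X₂ ω)) (b, c))
    (hStat : ∀ a b : α,
      pr μ (fun ω => (X₀ ω, X₁ ω)) (a, b) = pr μ (fun ω => (X₁ ω, X₂ ω)) (a, b)) :
    entropy μ X₁ + condEntropy μ X₁ (fun ω => (X₀ ω, X₂ ω))
      = 2 * condEntropy μ X₁ X₀ + mutualInfo μ X₂ X₀ := by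
  classical
  -- abbreviations for the pmfs
  set p : α × α × α → ℝ := pr μ (fun ω => (X₀ ω, X₁ ω, X₂ ω)) with hp
  set p01 : α → α → ℝ := fun a b => pr μ (fun ω => (X₀ ω, X₁ ω)) (a, b) with hp01def
  set p12 : α → α → ℝ := fun b c => pr μ (fun ω => (X₁ ω, X₂ ω)) (b, c) with hp12def
  set q0 : α → ℝ := pr μ X₀ with hq0def
  set q1 : α → ℝ := pr μ X₁ with hq1def
  set q2 : α → ℝ := pr μ X₂ with hq2def
  -- marginal identities
  have hp01 : ∀ a b, p01 a b = ∑ c, p (a, b, c) := by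
    intro a b
    show pr μ (fun ω => (X₀ ω, X₁ ω)) (a, b) = _
    rw [pr_fst μ (hX₀.prodMk hX₁) hX₂ (a, b)]
    exact Finset.sum_congr rfl fun c _ => pr_congr μ (by ext ω; simp [Prod.ext_iff, and_assoc])
  have hp12 : ∀ b c, p12 b c = ∑ a, p (a, b, c) := by
    intro b c
    exact pr_snd μ hX₀ (hX₁.prodMk hX₂) (b, c)
  have hq1a : ∀ b, q1 b = ∑ a, p01 a b := fun b => pr_snd μ hX₀ hX₁ b
  have hq1c : ∀ b, q1 b = ∑ c, p12 b c := fun b => pr_fst μ hX₁ hX₂ b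
  have hq0b : ∀ a, q0 a = ∑ b, p01 a b := fun a => pr_fst μ hX₀ hX₁ a
  have hq2b : ∀ c, q2 c = ∑ b, p12 b c := fun c => pr_snd μ hX₁ hX₂ c
  have hstat : ∀ a b, p01 a b = p12 a b := hStat
  -- equal one-dimensional marginals
  have hq01 : ∀ a, q0 a = q1 a := by
    intro a
    rw [hq0b, hq1c]
    exact Finset.sum_congr rfl fun b _ => hstat a b
  have hq12 : ∀ b, q1 b = q2 b := by
    intro b
    rw [hq1a, hq2b]
    exact Finset.sum_congr rfl fun a _ => hstat a b
  -- nonnegativity facts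
  have hpnn : ∀ t, 0 ≤ p t := fun t => pr_nonneg μ _ t
  have h01nn : ∀ a b, 0 ≤ p01 a b := fun a b => pr_nonneg μ _ _
  -- key pointwise identity from the Markov property
  have hkey : ∀ a b c,
      p (a, b, c) * (Real.log (p (a, b, c)) + Real.log (q1 b))
        = p (a, b, c) * (Real.log (p01 a b) + Real.log (p12 b c)) := by
    intro a b c
    rcases eq_or_lt_of_le (hpnn (a, b, c)) with h0 | hpos
    · rw [← h0]; ring
    · have h01pos : 0 < p01 a b := by
        refine lt_of_lt_of_le hpos ?_
        rw [hp01]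
        exact Finset.single_le_sum (fun c _ => hpnn (a, b, c)) (Finset.mem_univ c)
      have h12pos : 0 < p12 b c := by
        refine lt_of_lt_of_le hpos ?_
        rw [hp12]
        exact Finset.single_le_sum (fun a _ => hpnn (a, b, c)) (Finset.mem_univ a)
      have hq1pos : 0 < q1 b := by
        refine lt_of_lt_of_le h01pos ?_
        rw [hq1a]
        exact Finset.single_le_sum (fun a _ => h01nn a b) (Finset.mem_univ a)
      have hmul : p (a, b, c) * q1 b = p01 a b * p12 b c := hMarkov a b c
      have hlog : Real.log (p (a, b, c)) + Real.log (q1 b)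
          = Real.log (p01 a b) + Real.log (p12 b c) := by
        rw [← Real.log_mul (ne_of_gt hpos) (ne_of_gt hq1pos),
            ← Real.log_mul (ne_of_gt h01pos) (ne_of_gt h12pos), hmul]
      rw [hlog]
  -- collapse lemmas: summing against the joint pmf computes marginal expectations
  have collapse1 : ∀ f : α → ℝ,
      ∑ t : α × α × α, p t * f t.2.1 = ∑ b, q1 b * f b := by
    intro f
    simp only [Fintype.sum_prod_type]
    rw [Finset.sum_comm]
    refine Finset.sum_congr rfl fun b _ => ?_
    rw [hq1a b, Finset.sum_mul]
    refine Finset.sum_congr rfl fun a _ => ?_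
    rw [hp01, Finset.sum_mul]
  have collapse01 : ∀ f : α → α → ℝ,
      ∑ t : α × α × α, p t * f t.1 t.2.1 = ∑ a, ∑ b, p01 a b * f a b := by
    intro f
    simp only [Fintype.sum_prod_type]
    refine Finset.sum_congr rfl fun a _ => Finset.sum_congr rfl fun b _ => ?_
    rw [hp01, Finset.sum_mul]
  have collapse12 : ∀ f : α → α → ℝ,
      ∑ t : α × α × α, p t * f t.2.1 t.2.2 = ∑ b, ∑ c, p12 b c * f b c := by
    intro f
    simp only [Fintype.sum_prod_type]
    rw [Finset.sum_comm]
    refine Finset.sum_congr rfl fun b _ => ?_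
    rw [Finset.sum_comm]
    refine Finset.sum_congr rfl fun c _ => ?_
    rw [hp12, Finset.sum_mul]
  -- the core chain-rule identity  H(X₁) + H(X₀,X₁,X₂) = H(X₀,X₁) + H(X₁,X₂)
  have core : (∑ b, Real.negMulLog (q1 b)) + (∑ t : α × α × α, Real.negMulLog (p t))
      = (∑ a, ∑ b, Real.negMulLog (p01 a b)) + (∑ b, ∑ c, Real.negMulLog (p12 b c)) := by
    have h1 : ∑ b, q1 b * Real.log (q1 b)
        = ∑ t : α × α × α, p t * Real.log (q1 t.2.1) := (collapse1 _).symm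
    have h2 : ∑ a, ∑ b, p01 a b * Real.log (p01 a b)
        = ∑ t : α × α × α, p t * Real.log (p01 t.1 t.2.1) := (collapse01 _).symm
    have h3 : ∑ b, ∑ c, p12 b c * Real.log (p12 b c)
        = ∑ t : α × α × α, p t * Real.log (p12 t.2.1 t.2.2) := (collapse12 _).symm
    have h4 : ∑ t : α × α × α,
          (p t * Real.log (p t) + p t * Real.log (q1 t.2.1))
        = ∑ t : α × α × α,
          (p t * Real.log (p01 t.1 t.2.1) + p t * Real.log (p12 t.2.1 t.2.2)) := by
      refine Finset.sum_congr rfl fun t _ => ?_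
      have := hkey t.1 t.2.1 t.2.2
      simpa [mul_add] using this
    rw [Finset.sum_add_distrib, Finset.sum_add_distrib] at h4
    simp only [Real.negMulLog, neg_mul, Finset.sum_neg_distrib]
    linarith
  -- identify entropies with the above sums
  have E1 : entropy μ X₁ = ∑ b, Real.negMulLog (q1 b) := rfl
  have E0 : entropy μ X₀ = ∑ a, Real.negMulLog (q0 a) := rfl
  have E2 : entropy μ X₂ = ∑ c, Real.negMulLog (q2 c) := rfl
  have Etriple : entropy μ (fun ω => (X₀ ω, X₁ ω, X₂ ω)) = ∑ t : α × α × α, Real.negMulLog (p t) := rfl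
  have E01 : entropy μ (fun ω => (X₀ ω, X₁ ω)) = ∑ a, ∑ b, Real.negMulLog (p01 a b) := by
    simp only [entropy, Fintype.sum_prod_type]
    rfl
  have E12 : entropy μ (fun ω => (X₁ ω, X₂ ω)) = ∑ b, ∑ c, Real.negMulLog (p12 b c) := by
    simp only [entropy, Fintype.sum_prod_type]
    rfl
  have core' : entropy μ X₁ + entropy μ (fun ω => (X₀ ω, X₁ ω, X₂ ω))
      = entropy μ (fun ω => (X₀ ω, X₁ ω)) + entropy μ (fun ω => (X₁ ω, X₂ ω)) := by
    rw [E1, Etriple, E01, E12]; exact core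
  -- permutation invariances of entropy
  have Eperm : entropy μ (fun ω => (X₁ ω, (X₀ ω, X₂ ω)))
      = entropy μ (fun ω => (X₀ ω, X₁ ω, X₂ ω)) :=
    entropy_comp_equiv μ (fun ω => (X₀ ω, X₁ ω, X₂ ω))
      ⟨fun t => (t.2.1, (t.1, t.2.2)), fun t => (t.2.1, (t.1, t.2.2)),
        fun t => rfl, fun t => rfl⟩
  have Eswap10 : entropy μ (fun ω => (X₁ ω, X₀ ω)) = entropy μ (fun ω => (X₀ ω, X₁ ω)) :=
    entropy_comp_equiv μ (fun ω => (X₀ ω, X₁ ω)) (Equiv.prodComm α α)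
  have Eswap20 : entropy μ (fun ω => (X₂ ω, X₀ ω)) = entropy μ (fun ω => (X₀ ω, X₂ ω)) :=
    entropy_comp_equiv μ (fun ω => (X₀ ω, X₂ ω)) (Equiv.prodComm α α)
  -- stationarity consequences on entropies
  have E0eq1 : entropy μ X₀ = entropy μ X₁ := by
    rw [E0, E1]
    exact Finset.sum_congr rfl fun a _ => by rw [hq01]
  have E1eq2 : entropy μ X₁ = entropy μ X₂ := by
    rw [E1, E2]
    exact Finset.sum_congr rfl fun b _ => by rw [hq12]
  have E01eq12 : entropy μ (fun ω => (X₀ ω, X₁ ω)) = entropy μ (fun ω => (X₁ ω, X₂ ω)) := by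
    rw [E01, E12]
    exact Finset.sum_congr rfl fun a _ => Finset.sum_congr rfl fun b _ =>
      congrArg Real.negMulLog (hstat a b)
  simp only [condEntropy, mutualInfo]
  linarith
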